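/- In the pre-extension setting, the obstruction components λ(x,y,z) = φ_x(f(y,z)) − f(xy,xz) + g(x,y+z) − g(x,y) − g(x,z) and ρ(x,y,z) = ψ_z(f(x,y)) − f(xz,yz) + g(x+y,z) − g(x,z) − g(y,z) belong to the bicenter K_A for all x, y, z ∈ R, i.e. they multiply every element of A to zero on both sides. -/
import Mathlib


variable {R A : Type*}

/-- The bicenter `K_A = {c ∈ A : c·a = 0 = a·c for all a}`. -/
def bicenter (A : Type*) [NonUnitalRing A] : Set A :=
  {c | ∀ b : A, c * b = 0 ∧ b * c = 0}

/-- A pre-extension datum `(φ, ψ, f, g)` of the ring `A` by the ring `R`: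
`φ_x, ψ_x ∈ End_ℤ(A)` and `f, g : R² → A` satisfying the relations (10) and the
defining relations of the factor sets. -/
def IsPreExtension [Ring R] [NonUnitalRing A]
    (φ ψ : R → AddMonoid.End A) (f g : R → R → A) : Prop :=
  (∀ a : A, φ 1 a = a) ∧
  (∀ a : A, ψ 1 a = a) ∧
  (∀ (x : R) (a b : A), a * φ x b = ψ x a * b) ∧
  (∀ (x : R) (a b : A), φ x (a * b) = φ x a * b) ∧
  (∀ (x : R) (a b : A), ψ x (b * a) = b * ψ x a) ∧
  (∀ (x : R) (a b : A), ψ x b * a = b * φ x a) ∧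
  (∀ (x y : R) (a : A), φ x (ψ y a) = ψ y (φ x a)) ∧
  (∀ (x y : R) (a : A), φ x (φ y a) = φ (x * y) a + g x y * a) ∧
  (∀ (x y : R) (a : A), ψ y (ψ x a) = ψ (x * y) a + a * g x y) ∧
  (∀ (x y : R) (a : A), φ x a + φ y a = φ (x + y) a + f x y * a) ∧
  (∀ (x y : R) (a : A), ψ x a + ψ y a = ψ (x + y) a + a * f x y)

variable [Ring R] [NonUnitalRing A]

/-- The obstruction component `ξ`. -/
def xiObs (f : R → R → A) (x y z : R) : A :=
  f y z - f (x + y) z + f x (y + z) - f x y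

/-- The obstruction component `η`. -/
def etaObs (f : R → R → A) (x y : R) : A :=
  f x y - f y x

/-- The obstruction component `α`. -/
def alphaObs (φ ψ : R → AddMonoid.End A) (g : R → R → A) (x y z : R) : A :=
  φ x (g y z) - g (x * y) z + g x (y * z) - ψ z (g x y)

/-- The obstruction component `λ`. -/
def lambdaObs (φ : R → AddMonoid.End A) (f g : R → R → A) (x y z : R) : A :=
  φ x (f y z) - f (x * y) (x * z) + g x (y + z) - g x y - g x z

/-- The obstruction component `ρ`. -/
def rhoObs (ψ : R → AddMonoid.End A) (f g : R → R → A) (x y z : R) : A :=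
  ψ z (f x y) - f (x * z) (y * z) + g (x + y) z - g x z - g y z

/-- The obstruction components
`λ(x,y,z) = φ_x(f(y,z)) − f(xy,xz) + g(x,y+z) − g(x,y) − g(x,z)` and
`ρ(x,y,z) = ψ_z(f(x,y)) − f(xz,yz) + g(x+y,z) − g(x,z) − g(y,z)`
lie in the bicenter. -/
theorem lambda_rho_mem_bicenter
    [Nontrivial R] (φ ψ : R → AddMonoid.End A) (f g : R → R → A)
    (h : IsPreExtension φ ψ f g) :
    ∀ x y z : R,
      lambdaObs φ f g x y z ∈ bicenter A ∧ rhoObs ψ f g x y z ∈ bicenter A := by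
  obtain ⟨h1, h2, h3, h4, h5, h6, h7, h8, h9, h10, h11⟩ := h
  -- derived identities
  have ga : ∀ (x y : R) (a : A), g x y * a = φ x (φ y a) - φ (x * y) a := by
    intro x y a; rw [h8]; abel
  have ag : ∀ (x y : R) (a : A), a * g x y = ψ y (ψ x a) - ψ (x * y) a := by
    intro x y a; rw [h9]; abel
  have fa : ∀ (x y : R) (a : A), f x y * a = φ x a + φ y a - φ (x + y) a := by
    intro x y a; rw [h10]; abel
  have af : ∀ (x y : R) (a : A), a * f x y = ψ x a + ψ y a - ψ (x + y) a := by
    intro x y a; rw [h11]; abel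
  intro x y z
  constructor
  · intro a
    constructor
    · have : φ x (f y z) * a = φ x (f y z * a) := (h4 x (f y z) a).symm
      simp only [lambdaObs, sub_mul, add_mul, this, fa, ga, map_sub, map_add,
        mul_add]
      abel
    · have : a * φ x (f y z) = ψ x a * f y z := h3 x a (f y z)
      simp only [lambdaObs, mul_sub, mul_add, this, af, ag, mul_add]
      abel
  · intro a
    constructor
    · have : ψ z (f x y) * a = f x y * φ z a := h6 z a (f x y)
      simp only [rhoObs, sub_mul, add_mul, this, fa, ga, add_mul]
      abel
    · have : a * ψ z (f x y) = ψ z (a * f x y) := (h5 z (f x y) a).symm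
      simp only [rhoObs, mul_sub, mul_add, this, af, ag, map_sub, map_add,
        add_mul]
      abel
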